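/- arXiv:2004.11749 — 2 statements merged into one kernel-verified Lean document; each statement's English description precedes it below -/
import Mathlib

section
/- Suppose X carries the topology generated by the family {X_p : p ∈ I}, and suppose h(x) is finite for every x ∈ X. Endow the quotient X/∼ with the partial order [x] ≤ [y] ⟺ h(x) ⊆ h(y) and with the Alexandroff (upper set) topology, in which a set is open if and only if it is an upper set. Then the quotient map s : X → X/∼, s(x) = [x], is continuous and surjective; that is, (X, s) is a stratification of X in the sense of the paper (a poset-stratified space). -/
open Topology

/-- The equivalence relation `x ∼ y ↔ h x = h y`, where `h x = {p | x ∈ Xp p}`. -/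
def covSetoid {X I : Type*} (Xp : I → Set X) : Setoid X :=
  ⟨fun x y => {p : I | x ∈ Xp p} = {p : I | y ∈ Xp p},
   ⟨fun _ => rfl, fun h => h.symm, fun h₁ h₂ => h₁.trans h₂⟩⟩

/-- The Alexandroff topology on `X/∼` associated with the partial order
`[x] ≤ [y] ↔ h x ⊆ h y`: a set is open iff it is an upper set. -/
def alexandroffTop {X I : Type*} (Xp : I → Set X) :
    TopologicalSpace (Quotient (covSetoid Xp)) where
  IsOpen U := ∀ a b : X, {p : I | a ∈ Xp p} ⊆ {p : I | b ∈ Xp p} →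
    Quotient.mk (covSetoid Xp) a ∈ U → Quotient.mk (covSetoid Xp) b ∈ U
  isOpen_univ := fun _ _ _ _ => trivial
  isOpen_inter := fun _ _ hU hV a b hab hmem =>
    ⟨hU a b hab hmem.1, hV a b hab hmem.2⟩
  isOpen_sUnion := fun _ hS a b hab hmem => by
    obtain ⟨T, hT, haT⟩ := hmem
    exact ⟨T, hT, hS T hT a b hab haT⟩

/-- If `X` carries the topology generated by the family `Xp` and
every `h x = {p | x ∈ Xp p}` is finite, then the quotient map
`s : X → X/∼` is continuous (for the Alexandroff topology on the quotient)
and surjective: `(X, s)` is a poset-stratified space. -/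
theorem quotientMap_continuous_surjective {X I : Type*} (Xp : I → Set X)
    (hfin : ∀ x : X, {p : I | x ∈ Xp p}.Finite) :
    Continuous[TopologicalSpace.generateFrom (Set.range Xp), alexandroffTop Xp]
      (Quotient.mk (covSetoid Xp)) ∧
    Function.Surjective (Quotient.mk (covSetoid Xp)) := by
  constructor
  · letI t : TopologicalSpace X := TopologicalSpace.generateFrom (Set.range Xp)
    refine continuous_def.2 fun U hU => ?_
    have hgen : ∀ p : I, IsOpen[t] (Xp p) :=
      fun p => TopologicalSpace.GenerateOpen.basic _ ⟨p, rfl⟩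
    have key : Quotient.mk (covSetoid Xp) ⁻¹' U =
        ⋃ x ∈ {x : X | Quotient.mk (covSetoid Xp) x ∈ U},
          ⋂ p ∈ {p : I | x ∈ Xp p}, Xp p := by
      ext y
      simp only [Set.mem_preimage, Set.mem_iUnion, Set.mem_iInter, Set.mem_setOf_eq]
      constructor
      · exact fun hy => ⟨y, hy, fun p hp => hp⟩
      · rintro ⟨x, hx, hsub⟩
        exact hU x y hsub hx
    rw [key]
    refine isOpen_biUnion fun x _ => ?_
    have := (hfin x).isOpen_biInter (f := Xp) (fun p _ => hgen p)
    exact this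
  · exact Quotient.mk_surjective
end

section
/- Let Y be a one-point topological space endowed with the sheaf of continuous real-valued functions (so the sections over the unique nonempty open set form the ring C(Y, ℝ) ≅ ℝ and the sections over the empty set form the zero ring), regarded as a locally ringed space. Then Y is isomorphic, in the category of locally ringed spaces, to Spec ℝ. In particular, the underlying topological space of Spec ℝ is a single point (the zero ideal is the only prime ideal of ℝ) and its structure sheaf has global sections isomorphic to ℝ. -/
open AlgebraicGeometry CategoryTheory TopologicalSpace Opposite

section Aux

/-- Evaluation at the unique point gives a ring equivalence `C(X, ℝ) ≃+* ℝ`. -/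
def evalRingEquivAux (X : Type*) [TopologicalSpace X] [Unique X] : C(X, ℝ) ≃+* ℝ where
  toFun f := f default
  invFun r := ContinuousMap.const X r
  left_inv f := ContinuousMap.ext fun x => by rw [Subsingleton.elim x default]; rfl
  right_inv r := rfl
  map_mul' _ _ := rfl
  map_add' _ _ := rfl

/-- On a one-point space, the germ map from global sections is an isomorphism. -/
lemma isIso_Γgerm_aux {X : TopCat} [Subsingleton X] (F : TopCat.Presheaf CommRingCat X)
    (x : X) : IsIso (F.Γgerm x) := by
  have htop : ∀ (U : Opens X), x ∈ U → U = ⊤ := by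
    intro U hx
    ext z
    refine ⟨fun _ => trivial, fun _ => ?_⟩
    rwa [Subsingleton.elim z x]
  rw [ConcreteCategory.isIso_iff_bijective]
  constructor
  · intro a b hab
    obtain ⟨W, hW, iU, iV, hmap⟩ := TopCat.Presheaf.germ_eq (U := ⊤) (V := ⊤) F x trivial trivial a b hab
    obtain rfl := htop W hW
    rw [Subsingleton.elim iU (𝟙 _), Subsingleton.elim iV (𝟙 _)] at hmap
    simpa using hmap
  · intro t
    obtain ⟨U, hx, s, rfl⟩ := TopCat.Presheaf.germ_exist F (x := x) t
    obtain rfl := htop U hx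
    exact ⟨s, rfl⟩

/-- If `R` is ring-equivalent to `ℝ`, `toStalk` is an isomorphism. -/
lemma isIso_toStalk_aux (R : CommRingCat) (eR : R ≃+* ℝ) (p : PrimeSpectrum R) :
    IsIso (StructureSheaf.toStalk R p) := by
  have hunit : ∀ y ∈ p.asIdeal.primeCompl, IsUnit y := by
    intro y hy
    have hy0 : (eR y : ℝ) ≠ 0 := by
      intro h
      apply hy
      have : y = 0 := by
        apply eR.injective; simpa using h
      rw [this]; exact p.asIdeal.zero_mem
    have : IsUnit (eR y) := isUnit_iff_ne_zero.mpr hy0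
    have h2 : IsUnit (eR.symm (eR y)) := this.map eR.symm.toRingHom
    simpa using h2
  have hbij : Function.Bijective (algebraMap R ((Spec.structureSheaf R).presheaf.stalk p)) :=
    (IsLocalization.atUnits R p.asIdeal.primeCompl
      (S := (Spec.structureSheaf R).presheaf.stalk p) hunit).bijective
  exact (ConcreteCategory.isIso_iff_bijective _).mpr hbij

end Aux

/-- Let `Y` be a locally ringed space whose underlying
topological space has exactly one point and whose structure sheaf is the sheaf
of continuous real-valued functions: the sections over each open `U` are
identified, as a ring and compatibly with restriction, with `C(U, ℝ)`
(over the empty set this is the zero ring).  Then `Y ≅ Spec ℝ` in the category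
of locally ringed spaces; in particular the underlying space of `Spec ℝ` is a
single point and its global sections are isomorphic to `ℝ`. -/
theorem onePoint_continuousFunctions_iso_Spec_real
    (Y : LocallyRingedSpace) [Unique Y.carrier]
    (e : ∀ U : Opens Y.carrier, Y.presheaf.obj (op U) ≃+* C(U, ℝ))
    (he : ∀ (U V : Opens Y.carrier) (h : V ≤ U) (f : Y.presheaf.obj (op U)),
      e V (Y.presheaf.map (homOfLE h).op f) =
        (e U f).comp ⟨Set.inclusion h, continuous_inclusion h⟩) :
    Nonempty (Y ≅ Spec.locallyRingedSpaceObj (CommRingCat.of ℝ)) ∧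
    Nonempty (Unique (PrimeSpectrum ℝ)) ∧
    Nonempty
      ((Spec.locallyRingedSpaceObj (CommRingCat.of ℝ)).presheaf.obj (op ⊤) ≃+* ℝ) := by
  refine ⟨?_, ⟨inferInstance⟩,
    ⟨(StructureSheaf.globalSectionsIso (CommRingCat.of ℝ)).commRingCatIsoToRingEquiv.symm⟩⟩
  -- the unique point of `Y`
  haveI : Unique ((⊤ : Opens Y.carrier) : Set Y.carrier) :=
    ⟨⟨⟨default, trivial⟩⟩, fun a => Subtype.ext (Subsingleton.elim _ _)⟩
  -- global sections of `Y` are isomorphic to `ℝ`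
  let eR : (LocallyRingedSpace.Γ.obj (op Y) : Type _) ≃+* ℝ :=
    (e ⊤).trans (evalRingEquivAux _)
  haveI : Nontrivial (LocallyRingedSpace.Γ.obj (op Y) : Type _) := eR.toEquiv.nontrivial
  haveI : Subsingleton (PrimeSpectrum (LocallyRingedSpace.Γ.obj (op Y))) := by
    constructor
    intro p q
    exact PrimeSpectrum.comap_injective_of_surjective eR.symm.toRingHom
      eR.symm.surjective (Subsingleton.elim _ _)
  haveI : Unique (PrimeSpectrum (LocallyRingedSpace.Γ.obj (op Y))) :=
    uniqueOfSubsingleton (Classical.arbitrary _)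
  -- the ring map `ℝ ⟶ Γ(Y)`
  let φ : CommRingCat.of ℝ ⟶ LocallyRingedSpace.Γ.obj (op Y) := CommRingCat.ofHom eR.symm.toRingHom
  haveI hφ : IsIso φ := (ConcreteCategory.isIso_iff_bijective φ).mpr eR.symm.bijective
  haveI : IsIso (Spec.locallyRingedSpaceMap φ) :=
    inferInstanceAs (IsIso (Spec.toLocallyRingedSpace.map φ.op))
  -- `toΓSpec` is an isomorphism
  haveI : IsIso Y.toΓSpec := by
    haveI hs : ∀ x : Y.carrier, IsIso (Y.toΓSpecSheafedSpace.hom.stalkMap x) := by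
      intro x
      have w := LocallyRingedSpace.toStalk_stalkMap_toΓSpec (X := Y) x
      haveI : IsIso (Y.presheaf.Γgerm x) := isIso_Γgerm_aux Y.presheaf x
      haveI h2 : IsIso (StructureSheaf.toStalk (LocallyRingedSpace.Γ.obj (op Y))
          (Y.toΓSpecSheafedSpace.hom.base x)) := isIso_toStalk_aux _ eR _
      haveI h3 : IsIso (StructureSheaf.toStalk (LocallyRingedSpace.Γ.obj (op Y))
          (Y.toΓSpecSheafedSpace.hom.base x) ≫ Y.toΓSpecSheafedSpace.hom.stalkMap x) := by
        rw [w]; exact this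
      exact IsIso.of_isIso_comp_left (StructureSheaf.toStalk (LocallyRingedSpace.Γ.obj (op Y))
        (Y.toΓSpecSheafedSpace.hom.base x)) (Y.toΓSpecSheafedSpace.hom.stalkMap x)
    have hopen : ∀ s : Set (PrimeSpectrum (LocallyRingedSpace.Γ.obj (op Y))), IsOpen s := by
      intro s
      rcases s.eq_empty_or_nonempty with rfl | ⟨a, ha⟩
      · exact isOpen_empty
      · have : s = Set.univ := Set.eq_univ_of_forall fun z => (Subsingleton.elim z a) ▸ ha
        rw [this]; exact isOpen_univ
    have hbase : Topology.IsOpenEmbedding Y.toΓSpecSheafedSpace.hom.base :=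
      Topology.IsOpenEmbedding.of_continuous_injective_isOpenMap
        Y.toΓSpecSheafedSpace.hom.base.hom.continuous
        (fun a b _ => Subsingleton.elim a b)
        (fun s _ => hopen _)
    haveI : Subsingleton
        ((Spec.toSheafedSpace.obj (op (LocallyRingedSpace.Γ.obj (op Y)))).carrier : Type _) :=
      inferInstanceAs (Subsingleton (PrimeSpectrum _))
    haveI hepi : Epi Y.toΓSpecSheafedSpace.hom.base :=
      (TopCat.epi_iff_surjective _).mpr fun p => ⟨default, Subsingleton.elim _ _⟩
    haveI : SheafedSpace.IsOpenImmersion Y.toΓSpecSheafedSpace :=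
      SheafedSpace.IsOpenImmersion.of_stalk_iso _ hbase
    haveI : IsIso Y.toΓSpecSheafedSpace := SheafedSpace.IsOpenImmersion.to_iso _
    haveI : IsIso (LocallyRingedSpace.forgetToSheafedSpace.map Y.toΓSpec) :=
      inferInstanceAs (IsIso Y.toΓSpecSheafedSpace)
    exact isIso_of_reflects_iso Y.toΓSpec LocallyRingedSpace.forgetToSheafedSpace
  exact ⟨asIso (Y.toΓSpec ≫ Spec.locallyRingedSpaceMap φ)⟩
end
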